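/- Fix an integer n ≥ 1 and reals r₊ > 0 and a with 0 ≤ a < r₊. Set ω = ω_{2n+1} > 0, m = r₊^(2(n+1)) / (2(r₊² − a²)) and 𝒜 = ω·r₊^(2(n+1)) / √(r₊² − a²). Then m = (r₊²/(r₊² − a²))^((n+1)/(2n+1)) · (1/2)·(𝒜/ω)^(2n/(2n+1)). Consequently m ≥ (1/2)(𝒜/ω)^(2n/(2n+1)), with equality if and only if a = 0. -/

import Mathlib

/-- Penrose inequality for the Myers–Perry family: with `m = r₊^(2(n+1))/(2(r₊²−a²))`
and `𝒜 = ω·r₊^(2(n+1))/√(r₊²−a²)`, one has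
`m = (r₊²/(r₊²−a²))^((n+1)/(2n+1))·(1/2)(𝒜/ω)^(2n/(2n+1))`, hence
`m ≥ (1/2)(𝒜/ω)^(2n/(2n+1))` with equality iff `a = 0`. -/
theorem myersPerry_penrose (n : ℕ) (hn : 1 ≤ n) (rp a ω : ℝ) (hrp : 0 < rp)
    (ha : 0 ≤ a) (har : a < rp) (hω : 0 < ω)
    (m A : ℝ) (hm : m = rp ^ (2 * (n + 1)) / (2 * (rp ^ 2 - a ^ 2)))
    (hA : A = ω * rp ^ (2 * (n + 1)) / Real.sqrt (rp ^ 2 - a ^ 2)) :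
    m = (rp ^ 2 / (rp ^ 2 - a ^ 2)) ^ (((n : ℝ) + 1) / (2 * n + 1)) *
        ((1 : ℝ) / 2 * (A / ω) ^ ((2 * (n : ℝ)) / (2 * n + 1))) ∧
    (1 : ℝ) / 2 * (A / ω) ^ ((2 * (n : ℝ)) / (2 * n + 1)) ≤ m ∧
    (m = (1 : ℝ) / 2 * (A / ω) ^ ((2 * (n : ℝ)) / (2 * n + 1)) ↔ a = 0) := by
  set d : ℝ := rp ^ 2 - a ^ 2 with hddef
  have hd : 0 < d := by nlinarith
  set p : ℝ := (2 * (n : ℝ)) / (2 * n + 1) with hpdef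
  set q : ℝ := ((n : ℝ) + 1) / (2 * n + 1) with hqdef
  have h2n1 : (2 * (n : ℝ) + 1) ≠ 0 := by positivity
  have hsd : Real.sqrt d = d ^ ((1:ℝ)/2) := Real.sqrt_eq_rpow d
  have hnatpow : (rp : ℝ) ^ (2 * (n + 1)) = rp ^ ((2 * (n:ℝ) + 2)) := by
    rw [← Real.rpow_natCast rp (2 * (n + 1))]
    push_cast; ring_nf
  have hAω : A / ω = rp ^ ((2 * (n:ℝ) + 2)) * d ^ (-(1:ℝ)/2) := by
    rw [hA, hnatpow]
    rw [show (-(1:ℝ)/2) = -((1:ℝ)/2) by ring, Real.rpow_neg hd.le, ← hsd]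
    have : Real.sqrt d ≠ 0 := by positivity
    field_simp
  have hpow : (A / ω) ^ p = rp ^ ((2 * (n:ℝ) + 2) * p) * d ^ (-(1:ℝ)/2 * p) := by
    rw [hAω, Real.mul_rpow (by positivity) (by positivity),
      ← Real.rpow_mul hrp.le, ← Real.rpow_mul hd.le]
  have hcq : (rp ^ 2 / d) ^ q = rp ^ ((2:ℝ) * q) * d ^ (-q) := by
    rw [Real.div_rpow (by positivity) hd.le, Real.rpow_neg hd.le,
      ← Real.rpow_natCast rp 2, ← Real.rpow_mul hrp.le]
    push_cast
    rw [div_eq_mul_inv]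
  have key : m = (rp ^ 2 / d) ^ q * ((1:ℝ)/2 * (A / ω) ^ p) := by
    rw [hm, hpow, hcq, hnatpow]
    have e1 : (2:ℝ) * q + (2 * (n:ℝ) + 2) * p = 2 * (n:ℝ) + 2 := by
      rw [hpdef, hqdef]; field_simp; ring
    have e2 : -q + -(1:ℝ)/2 * p = -1 := by
      rw [hpdef, hqdef]; field_simp; ring
    rw [show (rp ^ (2*q) * d ^ (-q) * (1/2 * (rp ^ ((2*(n:ℝ)+2)*p) * d ^ (-(1:ℝ)/2*p)))) =
        1/2 * ((rp ^ ((2:ℝ)*q) * rp ^ ((2*(n:ℝ)+2)*p)) * (d ^ (-q) * d ^ (-(1:ℝ)/2*p))) by ring,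
      ← Real.rpow_add hrp, ← Real.rpow_add hd, e1, e2, Real.rpow_neg_one]
    field_simp
  have hB : 0 < (1:ℝ)/2 * (A / ω) ^ p := by
    have : 0 < A / ω := by rw [hAω]; positivity
    positivity
  have hx1 : 1 ≤ rp ^ 2 / d := by
    rw [le_div_iff₀ hd]; nlinarith
  have hq0 : 0 < q := by positivity
  have hc1 : 1 ≤ (rp ^ 2 / d) ^ q := Real.one_le_rpow hx1 hq0.le
  refine ⟨key, ?_, ?_⟩
  · calc (1:ℝ)/2 * (A / ω) ^ p = 1 * ((1:ℝ)/2 * (A / ω) ^ p) := by ring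
    _ ≤ (rp ^ 2 / d) ^ q * ((1:ℝ)/2 * (A / ω) ^ p) :=
        mul_le_mul_of_nonneg_right hc1 hB.le
    _ = m := key.symm
  · constructor
    · intro heq
      have hc : (rp ^ 2 / d) ^ q = 1 := by
        have := key.symm.trans heq
        field_simp at this
        rcases mul_eq_mul_right_iff.mp (by linarith [this] :
          (rp ^ 2 / d) ^ q * ((1:ℝ)/2 * (A / ω) ^ p) = 1 * ((1:ℝ)/2 * (A / ω) ^ p)) with h | h
        · exact h
        · exact absurd h hB.ne'
      have hbase : rp ^ 2 / d = 1 := by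
        have : ((rp ^ 2 / d) ^ q) ^ (1/q) = (1:ℝ) ^ (1/q) := by rw [hc]
        rwa [← Real.rpow_mul (by positivity), mul_one_div, div_self hq0.ne',
          Real.rpow_one, Real.one_rpow] at this
      have : d = rp ^ 2 := by field_simp at hbase; linarith
      have ha2 : a ^ 2 = 0 := by rw [hddef] at this; linarith
      exact (pow_eq_zero_iff two_ne_zero).mp ha2
    · intro h0
      rw [key]
      have : rp ^ 2 / d = 1 := by rw [hddef, h0]; field_simp; ring
      rw [this, Real.one_rpow, one_mul]
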